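/- Let g ∈ C²([0,1], ℝ) with g(0) = g(1) = 0. Then ∫₀¹ |(d/dr)(r g(r))|² (1/r) dr ≤ (∫₀¹ |(Lg)(r)|² r dr)^{1/2} (∫₀¹ |g(r)|² r dr)^{1/2} ≤ ∫₀¹ |(Lg)(r)|² r dr (all quantities may be +∞). -/

import Mathlib

open MeasureTheory Set

/-- The operator `L g = g'' + g'/r - g/r²`. -/
noncomputable def Lre (g : ℝ → ℝ) (r : ℝ) : ℝ :=
  deriv (deriv g) r + deriv g r / r - g r / r ^ 2


namespace Stmt1Aux

variable {g : ℝ → ℝ}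

lemma contDiff_deriv_g (hg : ContDiff ℝ 2 g) : ContDiff ℝ 1 (deriv g) := by
  have h2 : ContDiff ℝ ((1:ℕ∞)+1) g := by exact_mod_cast hg
  exact (contDiff_succ_iff_deriv.mp h2).2.2

lemma hasDerivAt_u (hg : ContDiff ℝ 2 g) (r : ℝ) :
    HasDerivAt (fun s => s * g s) (g r + r * deriv g r) r := by
  have := (hasDerivAt_id r).mul (hg.differentiable (by norm_num) r).hasDerivAt
  exact this.congr_deriv (by simp)

lemma deriv_u (hg : ContDiff ℝ 2 g) :
    deriv (fun s => s * g s) = fun r => g r + r * deriv g r :=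
  funext fun r => (hasDerivAt_u hg r).deriv

lemma contDiff_uD (hg : ContDiff ℝ 2 g) : ContDiff ℝ 1 (fun r => g r + r * deriv g r) :=
  (hg.of_le (by norm_num)).add (contDiff_id.mul (contDiff_deriv_g hg))

lemma hasDerivAt_uD (hg : ContDiff ℝ 2 g) (r : ℝ) :
    HasDerivAt (fun s => g s + s * deriv g s)
      (2 * deriv g r + r * deriv (deriv g) r) r := by
  have h1 : HasDerivAt g (deriv g r) r := (hg.differentiable (by norm_num) r).hasDerivAt
  have h2 : HasDerivAt (fun s => s * deriv g s) (deriv g r + r * deriv (deriv g) r) r := by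
    have := (hasDerivAt_id r).mul
      ((contDiff_deriv_g hg).differentiable (by norm_num) r).hasDerivAt
    exact this.congr_deriv (by simp)
  have := h1.add h2
  exact this.congr_deriv (by ring)

lemma Lre_eq (hg : ContDiff ℝ 2 g) {r : ℝ} (hr : r ≠ 0) :
    Lre g r = (2 * deriv g r + r * deriv (deriv g) r) / r
      - (g r + r * deriv g r) / r ^ 2 := by
  unfold Lre
  field_simp
  ring

lemma measurable_Lre (hg : ContDiff ℝ 2 g) : Measurable (Lre g) := by
  unfold Lre
  have h1 : Continuous (deriv (deriv g)) := (contDiff_deriv_g hg).continuous_deriv le_rfl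
  have h2 : Continuous (deriv g) := (contDiff_deriv_g hg).continuous
  exact (h1.measurable.add (h2.measurable.div measurable_id)).sub
    (hg.continuous.measurable.div (measurable_id.pow_const 2))

lemma continuousOn_Lre (hg : ContDiff ℝ 2 g) : ContinuousOn (Lre g) {r : ℝ | r ≠ 0} := by
  unfold Lre
  have h1 : Continuous (deriv (deriv g)) := (contDiff_deriv_g hg).continuous_deriv le_rfl
  have h2 : Continuous (deriv g) := (contDiff_deriv_g hg).continuous
  apply ContinuousOn.sub
  · exact h1.continuousOn.add (h2.continuousOn.div continuousOn_id fun x hx => hx)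
  · exact hg.continuous.continuousOn.div (continuousOn_id.pow 2)
      (fun x hx => pow_ne_zero 2 hx)


lemma bound_uD (hg : ContDiff ℝ 2 g) (h0 : g 0 = 0) :
    ∃ M2 : ℝ, 0 ≤ M2 ∧ ∀ r ∈ Icc (0:ℝ) 1, |g r + r * deriv g r| ≤ M2 * r := by
  have hc : ContinuousOn (fun r => 2 * deriv g r + r * deriv (deriv g) r) (Icc (0:ℝ) 1) := by
    have h1 : Continuous (deriv (deriv g)) := (contDiff_deriv_g hg).continuous_deriv le_rfl
    have h2 : Continuous (deriv g) := (contDiff_deriv_g hg).continuous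
    exact ((continuous_const.mul h2).add (continuous_id.mul h1)).continuousOn
  obtain ⟨C, hC⟩ := isCompact_Icc.exists_bound_of_continuousOn hc
  have hC0 : 0 ≤ C := le_trans (norm_nonneg _) (hC 0 ⟨le_rfl, zero_le_one⟩)
  refine ⟨C, hC0, fun r hr => ?_⟩
  have := Convex.norm_image_sub_le_of_norm_hasDerivWithin_le
    (f := fun s => g s + s * deriv g s)
    (f' := fun r => 2 * deriv g r + r * deriv (deriv g) r)
    (fun x _ => (hasDerivAt_uD hg x).hasDerivWithinAt) hC (convex_Icc 0 1)
    (⟨le_rfl, zero_le_one⟩ : (0:ℝ) ∈ Icc (0:ℝ) 1) hr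
  simp only [h0, zero_mul, add_zero, sub_zero, Real.norm_eq_abs] at this
  calc |g r + r * deriv g r| ≤ C * |r| := this
  _ = C * r := by rw [abs_of_nonneg hr.1]

lemma bound_Lre (hg : ContDiff ℝ 2 g) (h0 : g 0 = 0) :
    ∃ ML : ℝ, 0 ≤ ML ∧ ∀ r ∈ Ioc (0:ℝ) 1, |Lre g r| ≤ ML := by
  have h1 : Continuous (deriv (deriv g)) := (contDiff_deriv_g hg).continuous_deriv le_rfl
  obtain ⟨K, hK⟩ := isCompact_Icc.exists_bound_of_continuousOn
    (h1.continuousOn : ContinuousOn (deriv (deriv g)) (Icc (0:ℝ) 1))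
  have hK0 : 0 ≤ K := le_trans (norm_nonneg _) (hK 0 ⟨le_rfl, zero_le_one⟩)
  refine ⟨K + K, by linarith, fun r hr => ?_⟩
  have hr0 : 0 < r := hr.1
  -- h s := s * deriv g s - g s, h' s = s * deriv (deriv g) s
  have hh : ∀ x ∈ Icc (0:ℝ) r, HasDerivWithinAt (fun s => s * deriv g s - g s)
      (x * deriv (deriv g) x) (Icc (0:ℝ) r) x := by
    intro x _
    have hd : HasDerivAt (fun s => s * deriv g s) (deriv g x + x * deriv (deriv g) x) x := by
      have := (hasDerivAt_id x).mul
        ((contDiff_deriv_g hg).differentiable (by norm_num) x).hasDerivAt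
      exact this.congr_deriv (by simp)
    have := hd.sub ((hg.differentiable (by norm_num) x).hasDerivAt)
    have h2 : deriv g x + x * deriv (deriv g) x - deriv g x = x * deriv (deriv g) x := by ring
    rw [h2] at this
    exact this.hasDerivWithinAt
  have hbd : ∀ x ∈ Icc (0:ℝ) r, ‖x * deriv (deriv g) x‖ ≤ K * r := by
    intro x hx
    have hxI : x ∈ Icc (0:ℝ) 1 := ⟨hx.1, le_trans hx.2 hr.2⟩
    rw [norm_mul]
    have h1 := hK x hxI
    have h2 : ‖x‖ ≤ r := by rw [Real.norm_eq_abs, abs_of_nonneg hx.1]; exact hx.2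
    calc ‖x‖ * ‖deriv (deriv g) x‖ ≤ r * K :=
          mul_le_mul h2 h1 (norm_nonneg _) (le_of_lt hr0 |> fun h => le_trans hx.1 hx.2)
    _ = K * r := mul_comm _ _
  have hMVT := Convex.norm_image_sub_le_of_norm_hasDerivWithin_le hh hbd (convex_Icc 0 r)
    (⟨le_rfl, le_of_lt hr0⟩ : (0:ℝ) ∈ Icc (0:ℝ) r) (⟨le_of_lt hr0, le_rfl⟩ : r ∈ Icc (0:ℝ) r)
  simp only [h0, zero_mul, sub_zero, zero_sub, neg_zero, add_zero, Real.norm_eq_abs] at hMVT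
  -- hMVT : |r * deriv g r - g r| ≤ K * r * |r - 0|
  have hnum : |r * deriv g r - g r| ≤ K * r * r := by
    calc |r * deriv g r - g r| ≤ K * r * |r| := hMVT
    _ = K * r * r := by rw [abs_of_nonneg (le_of_lt hr0)]
  have hform : Lre g r = deriv (deriv g) r + (r * deriv g r - g r) / r ^ 2 := by
    unfold Lre; field_simp; ring
  rw [hform]
  calc |deriv (deriv g) r + (r * deriv g r - g r) / r ^ 2|
      ≤ |deriv (deriv g) r| + |(r * deriv g r - g r) / r ^ 2| := abs_add_le _ _
  _ ≤ K + K := by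
      gcongr
      · exact hK r ⟨le_of_lt hr0, hr.2⟩
      · rw [abs_div, abs_of_nonneg (sq_nonneg r)]
        rw [div_le_iff₀ (by positivity)]
        calc |r * deriv g r - g r| ≤ K * r * r := hnum
        _ = K * r ^ 2 := by ring


lemma integrableOn_of_bound {s : Set ℝ} (hvol : volume s ≠ ⊤)
    {f : ℝ → ℝ} (hm : AEStronglyMeasurable f (volume : Measure ℝ)) (hs : MeasurableSet s)
    (M : ℝ) (hb : ∀ r ∈ s, |f r| ≤ M) : IntegrableOn f s volume := by
  apply Measure.integrableOn_of_bounded (M := M) hvol hm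
  rw [ae_restrict_iff' hs]
  exact ae_of_all _ (fun r hr => by simpa [Real.norm_eq_abs] using hb r hr)

lemma aesm_uD (hg : ContDiff ℝ 2 g) :
    AEStronglyMeasurable (fun r => (g r + r * deriv g r) ^ 2 / r) (volume : Measure ℝ) := by
  have h2 : Continuous (deriv g) := (contDiff_deriv_g hg).continuous
  exact ((((hg.continuous.add (continuous_id.mul h2)).measurable).pow_const 2).div
    measurable_id).aestronglyMeasurable

lemma aesm_Lgr (hg : ContDiff ℝ 2 g) :
    AEStronglyMeasurable (fun r => Lre g r * g r * r) (volume : Measure ℝ) :=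
  (((measurable_Lre hg).mul hg.continuous.measurable).mul measurable_id).aestronglyMeasurable

lemma uDsq_div_le (hg : ContDiff ℝ 2 g) (h0 : g 0 = 0) {M2 : ℝ}
    (hM2 : ∀ r ∈ Icc (0:ℝ) 1, |g r + r * deriv g r| ≤ M2 * r) {r : ℝ} (hr0 : 0 < r)
    (hr1 : r ≤ 1) : (g r + r * deriv g r) ^ 2 / r ≤ M2 ^ 2 * r := by
  have hb := hM2 r ⟨le_of_lt hr0, hr1⟩
  have hab := abs_le.mp hb
  rw [div_le_iff₀ hr0]
  nlinarith [hab.1, hab.2]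

lemma ibp (hg : ContDiff ℝ 2 g) (h0 : g 0 = 0) (h1 : g 1 = 0) :
    (∫ r in Ioo (0:ℝ) 1, ((g r + r * deriv g r) ^ 2 / r + Lre g r * g r * r)) = 0 := by
  obtain ⟨M2, hM20, hM2⟩ := bound_uD hg h0
  obtain ⟨ML, hML0, hML⟩ := bound_Lre hg h0
  obtain ⟨MG, hMG⟩ := isCompact_Icc.exists_bound_of_continuousOn
    (hg.continuous.continuousOn : ContinuousOn g (Icc (0:ℝ) 1))
  set φ : ℝ → ℝ := fun r => g r * (g r + r * deriv g r) with hφ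
  set ψ : ℝ → ℝ := fun r => (g r + r * deriv g r) ^ 2 / r + Lre g r * g r * r with hψ
  have h2 : Continuous (deriv g) := (contDiff_deriv_g hg).continuous
  have hφc : ContinuousOn φ (Icc (0:ℝ) 1) :=
    (hg.continuous.mul (hg.continuous.add (continuous_id.mul h2))).continuousOn
  have hψbd : ∀ r ∈ Ioc (0:ℝ) 1, |ψ r| ≤ M2 ^ 2 + ML * MG := by
    intro r hr
    have hr0 : 0 < r := hr.1
    have h1' : (g r + r * deriv g r) ^ 2 / r ≤ M2 ^ 2 * r := uDsq_div_le hg h0 hM2 hr0 hr.2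
    have h1'' : (0:ℝ) ≤ (g r + r * deriv g r) ^ 2 / r := by positivity
    have h2' : |Lre g r * g r * r| ≤ ML * MG := by
      rw [abs_mul, abs_mul]
      have hg' : |g r| ≤ MG := by
        simpa [Real.norm_eq_abs] using hMG r ⟨le_of_lt hr0, hr.2⟩
      have hrr : |r| ≤ 1 := by rw [abs_of_nonneg (le_of_lt hr0)]; exact hr.2
      have hMG0 : 0 ≤ MG := le_trans (abs_nonneg _) hg'
      calc |Lre g r| * |g r| * |r| ≤ ML * MG * 1 := by
            gcongr
            exact hML r hr
      _ = ML * MG := mul_one _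
    calc |ψ r| ≤ |(g r + r * deriv g r) ^ 2 / r| + |Lre g r * g r * r| := abs_add_le _ _
    _ ≤ M2 ^ 2 + ML * MG := by
        apply add_le_add _ h2'
        rw [abs_of_nonneg h1'']
        calc (g r + r * deriv g r) ^ 2 / r ≤ M2 ^ 2 * r := h1'
        _ ≤ M2 ^ 2 * 1 := by gcongr; exact hr.2
        _ = M2 ^ 2 := mul_one _
  have hψm : AEStronglyMeasurable ψ (volume : Measure ℝ) := (aesm_uD hg).add (aesm_Lgr hg)
  have hψint : IntervalIntegrable ψ volume 0 1 := by
    rw [intervalIntegrable_iff_integrableOn_Ioc_of_le zero_le_one]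
    exact integrableOn_of_bound (by simp [Real.volume_Ioc]) hψm measurableSet_Ioc _ hψbd
  have hφd : ∀ x ∈ Ioo (0:ℝ) 1, HasDerivWithinAt φ (ψ x) (Ioi x) x := by
    intro x hx
    have hx0 : x ≠ 0 := ne_of_gt hx.1
    have hgd : HasDerivAt g (deriv g x) x := (hg.differentiable (by norm_num) x).hasDerivAt
    have huDd := hasDerivAt_uD hg x
    have hd : HasDerivAt φ (deriv g x * (g x + x * deriv g x)
        + g x * (2 * deriv g x + x * deriv (deriv g) x)) x := hgd.mul huDd
    have heq : deriv g x * (g x + x * deriv g x)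
        + g x * (2 * deriv g x + x * deriv (deriv g) x) = ψ x := by
      rw [hψ]
      simp only
      unfold Lre
      field_simp
      ring
    rw [heq] at hd
    exact hd.hasDerivWithinAt
  have key := intervalIntegral.integral_eq_sub_of_hasDeriv_right_of_le zero_le_one hφc hφd hψint
  have hφ1 : φ 1 = 0 := by simp [hφ, h1]
  have hφ0 : φ 0 = 0 := by simp [hφ, h0]
  rw [hφ1, hφ0, sub_zero] at key
  rw [intervalIntegral.integral_of_le zero_le_one, integral_Ioc_eq_integral_Ioo] at key
  exact key


lemma intJ (hg : ContDiff ℝ 2 g) (h0 : g 0 = 0) :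
    IntegrableOn (fun r => (g r + r * deriv g r) ^ 2 / r) (Ioo (0:ℝ) 1) volume := by
  obtain ⟨M2, hM20, hM2⟩ := bound_uD hg h0
  apply integrableOn_of_bound (by simp [Real.volume_Ioo]) (aesm_uD hg) measurableSet_Ioo (M2 ^ 2)
  intro r hr
  have h1' : (g r + r * deriv g r) ^ 2 / r ≤ M2 ^ 2 * r := uDsq_div_le hg h0 hM2 hr.1 hr.2.le
  have h1'' : (0:ℝ) ≤ (g r + r * deriv g r) ^ 2 / r := div_nonneg (sq_nonneg _) hr.1.le
  rw [abs_of_nonneg h1'']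
  nlinarith [hr.2, hr.1]

lemma hardy (hg : ContDiff ℝ 2 g) (h0 : g 0 = 0) :
    (∫ r in Ioo (0:ℝ) 1, g r ^ 2 * r)
      ≤ ∫ r in Ioo (0:ℝ) 1, (g r + r * deriv g r) ^ 2 / r := by
  obtain ⟨M2, hM20, hM2⟩ := bound_uD hg h0
  have h2 : Continuous (deriv g) := (contDiff_deriv_g hg).continuous
  have huDc : Continuous (fun s => g s + s * deriv g s) :=
    hg.continuous.add (continuous_id.mul h2)
  set J : ℝ := ∫ r in Ioo (0:ℝ) 1, (g r + r * deriv g r) ^ 2 / r with hJ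
  have hJ0 : 0 ≤ J := setIntegral_nonneg measurableSet_Ioo
    (fun r hr => div_nonneg (sq_nonneg _) hr.1.le)
  have hpt : ∀ r ∈ Ioo (0:ℝ) 1, g r ^ 2 * r ≤ r / 2 * J := by
    intro r hr
    have hr0 : 0 < r := hr.1
    have hr1 : r < 1 := hr.2
    -- FTC: r * g r = ∫ s in Ioo 0 r, uD s
    have hfund : r * g r = ∫ s in Ioo (0:ℝ) r, (g s + s * deriv g s) := by
      have hf := intervalIntegral.integral_eq_sub_of_hasDerivAt
        (f := fun s => s * g s) (f' := fun s => g s + s * deriv g s)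
        (fun x _ => hasDerivAt_u hg x) (huDc.intervalIntegrable 0 r)
      rw [intervalIntegral.integral_of_le hr0.le, integral_Ioc_eq_integral_Ioo] at hf
      rw [hf]
      simp [h0]
    set μ : Measure ℝ := volume.restrict (Ioo (0:ℝ) r) with hμ
    haveI : IsFiniteMeasure μ := by
      constructor
      rw [hμ, Measure.restrict_apply_univ, Real.volume_Ioo]
      exact ENNReal.ofReal_lt_top
    have hsqrtm : AEStronglyMeasurable (fun s => Real.sqrt s) μ :=
      Real.continuous_sqrt.aestronglyMeasurable.restrict
    have hhm : AEStronglyMeasurable (fun s => |g s + s * deriv g s| / Real.sqrt s) μ :=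
      ((huDc.abs.measurable).div Real.continuous_sqrt.measurable).aestronglyMeasurable.restrict
    have hmemf : MemLp (fun s => Real.sqrt s) (ENNReal.ofReal 2) μ := by
      apply MemLp.of_bound hsqrtm 1
      rw [hμ, ae_restrict_iff' measurableSet_Ioo]
      refine ae_of_all _ (fun s hs => ?_)
      rw [Real.norm_eq_abs, abs_of_nonneg (Real.sqrt_nonneg s)]
      exact Real.sqrt_le_one.mpr (le_trans hs.2.le hr1.le)
    have hmemh : MemLp (fun s => |g s + s * deriv g s| / Real.sqrt s) (ENNReal.ofReal 2) μ := by
      apply MemLp.of_bound hhm M2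
      rw [hμ, ae_restrict_iff' measurableSet_Ioo]
      refine ae_of_all _ (fun s hs => ?_)
      have hs0 : 0 < s := hs.1
      have hsq : 0 < Real.sqrt s := Real.sqrt_pos.mpr hs0
      have hbb : |g s + s * deriv g s| ≤ M2 * s := hM2 s ⟨hs0.le, le_trans hs.2.le hr1.le⟩
      rw [Real.norm_eq_abs, abs_of_nonneg (by positivity)]
      rw [div_le_iff₀ hsq]
      calc |g s + s * deriv g s| ≤ M2 * s := hbb
      _ = M2 * (Real.sqrt s * Real.sqrt s) := by rw [Real.mul_self_sqrt hs0.le]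
      _ ≤ M2 * (1 * Real.sqrt s) := by
          gcongr
          exact Real.sqrt_le_one.mpr (le_trans hs.2.le hr1.le)
      _ = M2 * Real.sqrt s := by ring
    have hCS := MeasureTheory.integral_mul_le_Lp_mul_Lq_of_nonneg
      (Real.HolderConjugate.two_two) (μ := μ)
      (ae_of_all _ fun s => Real.sqrt_nonneg s)
      (ae_of_all _ fun s => div_nonneg (abs_nonneg _) (Real.sqrt_nonneg _)) hmemf hmemh
    -- LHS of hCS equals ∫ |uD|
    have hprod : (∫ s, Real.sqrt s * (|g s + s * deriv g s| / Real.sqrt s) ∂μ)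
        = ∫ s, |g s + s * deriv g s| ∂μ := by
      rw [hμ]
      apply setIntegral_congr_fun measurableSet_Ioo
      intro s hs
      have hsq : Real.sqrt s ≠ 0 := ne_of_gt (Real.sqrt_pos.mpr hs.1)
      field_simp
    have hfsq : (∫ s, Real.sqrt s ^ (2:ℝ) ∂μ) = r ^ 2 / 2 := by
      rw [hμ]
      have : ∀ s ∈ Ioo (0:ℝ) r, Real.sqrt s ^ (2:ℝ) = s := by
        intro s hs
        rw [Real.rpow_two, Real.sq_sqrt hs.1.le]
      rw [setIntegral_congr_fun measurableSet_Ioo this]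
      have := integral_id (a := 0) (b := r)
      rw [intervalIntegral.integral_of_le hr0.le, integral_Ioc_eq_integral_Ioo] at this
      rw [this]
      ring
    have hhsq : (∫ s, (|g s + s * deriv g s| / Real.sqrt s) ^ (2:ℝ) ∂μ)
        = ∫ s in Ioo (0:ℝ) r, (g s + s * deriv g s) ^ 2 / s := by
      rw [hμ]
      apply setIntegral_congr_fun measurableSet_Ioo
      intro s hs
      show (|g s + s * deriv g s| / Real.sqrt s) ^ (2:ℝ)
        = (g s + s * deriv g s) ^ 2 / s
      rw [Real.rpow_two, div_pow, sq_abs, Real.sq_sqrt hs.1.le]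
    have hYle : (∫ s in Ioo (0:ℝ) r, (g s + s * deriv g s) ^ 2 / s) ≤ J := by
      rw [hJ]
      apply setIntegral_mono_set (intJ hg h0)
      · exact (ae_restrict_iff' measurableSet_Ioo).mpr (ae_of_all _ fun s hs => div_nonneg (sq_nonneg _) hs.1.le)
      · exact HasSubset.Subset.eventuallyLE (Ioo_subset_Ioo le_rfl hr1.le)
    set Y : ℝ := ∫ s in Ioo (0:ℝ) r, (g s + s * deriv g s) ^ 2 / s with hY
    have hY0 : 0 ≤ Y := setIntegral_nonneg measurableSet_Ioo
      (fun s hs => div_nonneg (sq_nonneg _) hs.1.le)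
    rw [hprod, hfsq, hhsq] at hCS
    -- |r * g r| ≤ ∫ |uD| ≤ (r^2/2)^(1/2) * Y^(1/2)
    have habs : |r * g r| ≤ (r ^ 2 / 2) ^ ((1:ℝ)/2) * Y ^ ((1:ℝ)/2) := by
      rw [hfund]
      calc |∫ s in Ioo (0:ℝ) r, (g s + s * deriv g s)|
          ≤ ∫ s in Ioo (0:ℝ) r, |g s + s * deriv g s| := by
            simpa [Real.norm_eq_abs] using
              norm_integral_le_integral_norm (μ := μ) (fun s => g s + s * deriv g s)
      _ ≤ (r ^ 2 / 2) ^ ((1:ℝ)/2) * Y ^ ((1:ℝ)/2) := hCS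
    have hsq2 : (r * g r) ^ 2 ≤ (r ^ 2 / 2) * Y := by
      have h1 := sq_abs (r * g r) ▸ pow_le_pow_left₀ (abs_nonneg _) habs 2
      calc (r * g r) ^ 2 = |r * g r| ^ 2 := (sq_abs _).symm
      _ ≤ ((r ^ 2 / 2) ^ ((1:ℝ)/2) * Y ^ ((1:ℝ)/2)) ^ 2 :=
          pow_le_pow_left₀ (abs_nonneg _) habs 2
      _ = (r ^ 2 / 2) * Y := by
          rw [mul_pow, ← Real.rpow_natCast ((r ^ 2 / 2) ^ ((1:ℝ)/2)) 2,
            ← Real.rpow_natCast (Y ^ ((1:ℝ)/2)) 2,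
            ← Real.rpow_mul (by positivity), ← Real.rpow_mul hY0]
          norm_num
    have hYJ : (r * g r) ^ 2 ≤ (r ^ 2 / 2) * J := by
      calc (r * g r) ^ 2 ≤ (r ^ 2 / 2) * Y := hsq2
      _ ≤ (r ^ 2 / 2) * J := by gcongr
    nlinarith [hYJ, hr0]
  -- integrate the pointwise bound
  obtain ⟨MG, hMG⟩ := isCompact_Icc.exists_bound_of_continuousOn
    (hg.continuous.continuousOn : ContinuousOn g (Icc (0:ℝ) 1))
  have hintB : IntegrableOn (fun r => g r ^ 2 * r) (Ioo (0:ℝ) 1) volume :=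
    (((hg.continuous.pow 2).mul continuous_id).integrableOn_Ioc).mono_set Ioo_subset_Ioc_self
  have hintC : IntegrableOn (fun r => r / 2 * J) (Ioo (0:ℝ) 1) volume :=
    (((continuous_id.div_const 2).mul continuous_const).integrableOn_Ioc).mono_set
      Ioo_subset_Ioc_self
  have hmono := setIntegral_mono_on hintB hintC measurableSet_Ioo hpt
  have hCint : (∫ r in Ioo (0:ℝ) 1, r / 2 * J) = J / 4 := by
    have h1 : (∫ r in Ioo (0:ℝ) 1, r / 2 * J) = (J / 2) * ∫ r in Ioo (0:ℝ) 1, r := by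
      rw [← integral_const_mul]
      apply setIntegral_congr_fun measurableSet_Ioo
      intro s _
      ring
    have h2 : (∫ r in Ioo (0:ℝ) 1, r) = 1 / 2 := by
      have := integral_id (a := (0:ℝ)) (b := 1)
      rw [intervalIntegral.integral_of_le zero_le_one, integral_Ioc_eq_integral_Ioo] at this
      rw [this]; norm_num
    rw [h1, h2]; ring
  rw [hCint] at hmono
  linarith


lemma intLgr (hg : ContDiff ℝ 2 g) (h0 : g 0 = 0) :
    IntegrableOn (fun r => Lre g r * g r * r) (Ioo (0:ℝ) 1) volume := by
  obtain ⟨ML, hML0, hML⟩ := bound_Lre hg h0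
  obtain ⟨MG, hMG⟩ := isCompact_Icc.exists_bound_of_continuousOn
    (hg.continuous.continuousOn : ContinuousOn g (Icc (0:ℝ) 1))
  apply integrableOn_of_bound (by simp [Real.volume_Ioo]) (aesm_Lgr hg) measurableSet_Ioo (ML * MG)
  intro r hr
  have hg' : |g r| ≤ MG := by
    simpa [Real.norm_eq_abs] using hMG r ⟨hr.1.le, hr.2.le⟩
  have hMG0 : 0 ≤ MG := le_trans (abs_nonneg _) hg'
  rw [abs_mul, abs_mul]
  calc |Lre g r| * |g r| * |r| ≤ ML * MG * 1 := by
        gcongr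
        · exact hML r ⟨hr.1, hr.2.le⟩
        · rw [abs_of_nonneg hr.1.le]; exact hr.2.le
  _ = ML * MG := mul_one _

lemma intB (hg : ContDiff ℝ 2 g) :
    IntegrableOn (fun r => g r ^ 2 * r) (Ioo (0:ℝ) 1) volume :=
  (((hg.continuous.pow 2).mul continuous_id).integrableOn_Ioc).mono_set Ioo_subset_Ioc_self

end Stmt1Aux

open Stmt1Aux in
/-- For `g ∈ C²([0,1])` with `g(0) = g(1) = 0`,
`∫₀¹ |(d/dr)(rg)|² (1/r) dr ≤ (∫₀¹ |Lg|² r dr)^{1/2} (∫₀¹ |g|² r dr)^{1/2}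
  ≤ ∫₀¹ |Lg|² r dr` (all quantities may be `+∞`). -/
theorem stmt1 (g : ℝ → ℝ) (hg : ContDiff ℝ 2 g) (h0 : g 0 = 0) (h1 : g 1 = 0) :
    (∫⁻ r in Ioo (0:ℝ) 1, ENNReal.ofReal (|deriv (fun s => s * g s) r| ^ 2 / r))
      ≤ (∫⁻ r in Ioo (0:ℝ) 1, ENNReal.ofReal (|Lre g r| ^ 2 * r)) ^ ((1:ℝ)/2)
        * (∫⁻ r in Ioo (0:ℝ) 1, ENNReal.ofReal (|g r| ^ 2 * r)) ^ ((1:ℝ)/2)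
    ∧ (∫⁻ r in Ioo (0:ℝ) 1, ENNReal.ofReal (|Lre g r| ^ 2 * r)) ^ ((1:ℝ)/2)
        * (∫⁻ r in Ioo (0:ℝ) 1, ENNReal.ofReal (|g r| ^ 2 * r)) ^ ((1:ℝ)/2)
      ≤ ∫⁻ r in Ioo (0:ℝ) 1, ENNReal.ofReal (|Lre g r| ^ 2 * r) := by
  have hder : deriv (fun s => s * g s) = fun r => g r + r * deriv g r := deriv_u hg
  simp only [hder, sq_abs]
  set A : ENNReal := ∫⁻ r in Ioo (0:ℝ) 1, ENNReal.ofReal (Lre g r ^ 2 * r) with hA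
  set B : ENNReal := ∫⁻ r in Ioo (0:ℝ) 1, ENNReal.ofReal (g r ^ 2 * r) with hB
  set D : ENNReal := ∫⁻ r in Ioo (0:ℝ) 1, ENNReal.ofReal ((g r + r * deriv g r) ^ 2 / r) with hD
  set J : ℝ := ∫ r in Ioo (0:ℝ) 1, (g r + r * deriv g r) ^ 2 / r with hJ
  set Breal : ℝ := ∫ r in Ioo (0:ℝ) 1, g r ^ 2 * r with hBr
  have hDJ : D = ENNReal.ofReal J := by
    rw [hD, hJ]
    exact (ofReal_integral_eq_lintegral_ofReal (intJ hg h0)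
      ((ae_restrict_iff' measurableSet_Ioo).mpr
        (ae_of_all _ fun r hr => div_nonneg (sq_nonneg _) hr.1.le))).symm
  have hBB : B = ENNReal.ofReal Breal := by
    rw [hB, hBr]
    exact (ofReal_integral_eq_lintegral_ofReal (intB hg)
      ((ae_restrict_iff' measurableSet_Ioo).mpr
        (ae_of_all _ fun r hr => mul_nonneg (sq_nonneg _) hr.1.le))).symm
  -- first inequality
  have key1 : D ≤ A ^ ((1:ℝ)/2) * B ^ ((1:ℝ)/2) := by
    have hibp := ibp hg h0 h1
    have hsplit := integral_add (μ := volume.restrict (Ioo (0:ℝ) 1)) (intJ hg h0) (intLgr hg h0)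
    have hJeq : J = ∫ r in Ioo (0:ℝ) 1, -(Lre g r * g r * r) := by
      rw [integral_neg]
      rw [hsplit] at hibp
      rw [hJ]
      linarith
    have hstep1 : ENNReal.ofReal J ≤ ENNReal.ofReal (∫ r in Ioo (0:ℝ) 1, |Lre g r * g r * r|) := by
      apply ENNReal.ofReal_le_ofReal
      rw [hJeq]
      exact integral_mono ((intLgr hg h0).neg) ((intLgr hg h0).abs)
        (fun r => neg_le_abs _)
    have hstep2 : ENNReal.ofReal (∫ r in Ioo (0:ℝ) 1, |Lre g r * g r * r|)
        = ∫⁻ r in Ioo (0:ℝ) 1, ENNReal.ofReal (|Lre g r * g r * r|) :=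
      ofReal_integral_eq_lintegral_ofReal ((intLgr hg h0).abs)
        (ae_of_all _ fun r => abs_nonneg _)
    set f1 : ℝ → ENNReal := fun r => ENNReal.ofReal (|Lre g r| * Real.sqrt r) with hf1
    set f2 : ℝ → ENNReal := fun r => ENNReal.ofReal (|g r| * Real.sqrt r) with hf2
    have hstep3 : (∫⁻ r in Ioo (0:ℝ) 1, ENNReal.ofReal (|Lre g r * g r * r|))
        = ∫⁻ r in Ioo (0:ℝ) 1, (f1 * f2) r := by
      apply setLIntegral_congr_fun measurableSet_Ioo
      intro r hr
      have hr0 : 0 < r := hr.1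
      show ENNReal.ofReal (|Lre g r * g r * r|) = f1 r * f2 r
      rw [hf1, hf2]
      simp only
      rw [← ENNReal.ofReal_mul (by positivity)]
      congr 1
      have hss : Real.sqrt r * Real.sqrt r = r := Real.mul_self_sqrt hr0.le
      rw [abs_mul, abs_mul, abs_of_nonneg hr0.le]
      conv_rhs => rw [mul_mul_mul_comm, hss]
    have hm1 : AEMeasurable f1 (volume.restrict (Ioo (0:ℝ) 1)) := by
      apply Measurable.aemeasurable
      exact ((measurable_Lre hg).abs.mul Real.continuous_sqrt.measurable).ennreal_ofReal
    have hm2 : AEMeasurable f2 (volume.restrict (Ioo (0:ℝ) 1)) := by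
      apply Measurable.aemeasurable
      exact (hg.continuous.measurable.abs.mul Real.continuous_sqrt.measurable).ennreal_ofReal
    have hconj : Real.HolderConjugate 2 2 := Real.HolderConjugate.two_two
    have hholder := ENNReal.lintegral_mul_le_Lp_mul_Lq
      (volume.restrict (Ioo (0:ℝ) 1)) hconj hm1 hm2
    have hA2 : (∫⁻ r in Ioo (0:ℝ) 1, f1 r ^ (2:ℝ)) = A := by
      rw [hA]
      apply setLIntegral_congr_fun measurableSet_Ioo
      intro r hr
      show f1 r ^ (2:ℝ) = ENNReal.ofReal (Lre g r ^ 2 * r)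
      rw [hf1]
      simp only
      rw [ENNReal.ofReal_rpow_of_nonneg (by positivity) (by norm_num)]
      congr 1
      rw [Real.rpow_two, mul_pow, sq_abs, Real.sq_sqrt hr.1.le]
    have hB2 : (∫⁻ r in Ioo (0:ℝ) 1, f2 r ^ (2:ℝ)) = B := by
      rw [hB]
      apply setLIntegral_congr_fun measurableSet_Ioo
      intro r hr
      show f2 r ^ (2:ℝ) = ENNReal.ofReal (g r ^ 2 * r)
      rw [hf2]
      simp only
      rw [ENNReal.ofReal_rpow_of_nonneg (by positivity) (by norm_num)]
      congr 1
      rw [Real.rpow_two, mul_pow, sq_abs, Real.sq_sqrt hr.1.le]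
    calc D = ENNReal.ofReal J := hDJ
    _ ≤ ENNReal.ofReal (∫ r in Ioo (0:ℝ) 1, |Lre g r * g r * r|) := hstep1
    _ = ∫⁻ r in Ioo (0:ℝ) 1, ENNReal.ofReal (|Lre g r * g r * r|) := hstep2
    _ = ∫⁻ r in Ioo (0:ℝ) 1, (f1 * f2) r := hstep3
    _ ≤ (∫⁻ r in Ioo (0:ℝ) 1, f1 r ^ (2:ℝ)) ^ ((1:ℝ)/2)
        * (∫⁻ r in Ioo (0:ℝ) 1, f2 r ^ (2:ℝ)) ^ ((1:ℝ)/2) := hholder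
    _ = A ^ ((1:ℝ)/2) * B ^ ((1:ℝ)/2) := by rw [hA2, hB2]
  refine ⟨key1, ?_⟩
  -- second inequality
  have hchain : B ≤ A ^ ((1:ℝ)/2) * B ^ ((1:ℝ)/2) := by
    calc B = ENNReal.ofReal Breal := hBB
    _ ≤ ENNReal.ofReal J := ENNReal.ofReal_le_ofReal (hardy hg h0)
    _ = D := hDJ.symm
    _ ≤ A ^ ((1:ℝ)/2) * B ^ ((1:ℝ)/2) := key1
  by_cases hB0 : B = 0
  · rw [hB0, ENNReal.zero_rpow_of_pos (by norm_num), mul_zero]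
    exact zero_le
  by_cases hAtop : A = ⊤
  · rw [hAtop]; exact le_top
  have hBtop : B ≠ ⊤ := by rw [hBB]; exact ENNReal.ofReal_ne_top
  have hBh0 : B ^ ((1:ℝ)/2) ≠ 0 := by
    simp [ENNReal.rpow_eq_zero_iff, hB0, hBtop]
  have hBhtop : B ^ ((1:ℝ)/2) ≠ ⊤ := by
    simp [ENNReal.rpow_eq_top_iff, hB0, hBtop]
  have hBsplit : B ^ ((1:ℝ)/2) * B ^ ((1:ℝ)/2) = B := by
    rw [← ENNReal.rpow_add _ _ hB0 hBtop]
    norm_num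
  have hhalf : B ^ ((1:ℝ)/2) ≤ A ^ ((1:ℝ)/2) := by
    rw [← ENNReal.mul_le_mul_iff_left hBh0 hBhtop, hBsplit]
    exact hchain
  by_cases hA0 : A = 0
  · exfalso
    apply hB0
    have : A ^ ((1:ℝ)/2) = 0 := by simp [hA0, ENNReal.zero_rpow_of_pos]
    rw [this, zero_mul] at hchain
    exact le_antisymm hchain (zero_le)
  calc A ^ ((1:ℝ)/2) * B ^ ((1:ℝ)/2) ≤ A ^ ((1:ℝ)/2) * A ^ ((1:ℝ)/2) :=
        mul_le_mul_right hhalf _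
  _ = A := by rw [← ENNReal.rpow_add _ _ hA0 hAtop]; norm_num
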